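/- arXiv:2508.11587 — 3 statements merged into one kernel-verified Lean document; each statement's English description precedes it below -/
import Mathlib

section
/- For n >= 1, the total number of inversions across all parking functions of length n is (n(n+1)^{n-2}/2) * C(n,2). -/
open Finset

/-- A parking function of length `n` as a word in `[n]^n` (0-indexed values): its
weakly increasing rearrangement `b` satisfies `b i ≤ i` (0-indexed). -/
def IsPF (n : ℕ) (α : Fin n → Fin n) : Prop :=
  ∃ σ : Equiv.Perm (Fin n),
    (∀ i j : Fin n, i ≤ j → α (σ i) ≤ α (σ j)) ∧
    ∀ i : Fin n, (α (σ i) : ℕ) ≤ (i : ℕ)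

instance (n : ℕ) : DecidablePred (IsPF n) := fun _ => by unfold IsPF; infer_instance

lemma card_filter_val_lt {n : ℕ} (k : ℕ) (h : k ≤ n) :
    (univ.filter (fun i : Fin n => i.val < k)).card = k := by
  have : (univ.filter (fun i : Fin n => i.val < k)).card = (univ : Finset (Fin k)).card := by
    apply Finset.card_bij (fun (i : Fin n) hi => (⟨i.val, (mem_filter.mp hi).2⟩ : Fin k))
    · intro a ha; exact mem_univ _
    · intro a ha b hb hab
      simpa [Fin.ext_iff] using hab
    · intro b _
      exact ⟨⟨b.val, lt_of_lt_of_le b.isLt h⟩, mem_filter.mpr ⟨mem_univ _, b.isLt⟩, rfl⟩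
  simpa using this

lemma isPF_iff {n : ℕ} (α : Fin n → Fin n) :
    IsPF n α ↔ ∀ k ∈ Icc 1 n, k ≤ (univ.filter (fun i => (α i).val < k)).card := by
  constructor
  · rintro ⟨σ, hmono, hle⟩ k hk
    rw [mem_Icc] at hk
    calc k = (univ.filter (fun i : Fin n => i.val < k)).card := (card_filter_val_lt k hk.2).symm
    _ = ((univ.filter (fun i : Fin n => i.val < k)).image σ).card :=
        (Finset.card_image_of_injective _ σ.injective).symm
    _ ≤ (univ.filter (fun i => (α i).val < k)).card := by
        apply Finset.card_le_card
        intro j hj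
        rw [mem_image] at hj
        obtain ⟨m, hm, rfl⟩ := hj
        rw [mem_filter] at hm ⊢
        exact ⟨mem_univ _, lt_of_le_of_lt (hle m) hm.2⟩
  · intro h
    refine ⟨Tuple.sort α, fun i j hij => Tuple.monotone_sort α hij, ?_⟩
    intro i
    by_contra hcon
    push_neg at hcon
    set σ := Tuple.sort α with hσ
    have hk : i.val + 1 ∈ Icc 1 n := by
      rw [mem_Icc]; exact ⟨Nat.le_add_left 1 _, i.isLt⟩
    have h2 := h (i.val + 1) hk
    have hsub : (univ.filter (fun j => (α j).val < i.val + 1)) ⊆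
        (univ.filter (fun m : Fin n => m.val < i.val)).image σ := by
      intro j hj
      rw [mem_filter] at hj
      rw [mem_image]
      refine ⟨σ⁻¹ j, ?_, by simp⟩
      rw [mem_filter]
      refine ⟨mem_univ _, ?_⟩
      by_contra hm
      push_neg at hm
      have : α (σ i) ≤ α (σ (σ⁻¹ j)) := Tuple.monotone_sort α (by exact hm)
      simp only [Equiv.Perm.inv_def, Equiv.apply_symm_apply] at this
      omega
    have h3 := Finset.card_le_card hsub
    have h4 := Finset.card_image_le (f := σ) (s := univ.filter (fun m : Fin n => m.val < i.val))
    have h5 := card_filter_val_lt (n := n) i.val (le_of_lt i.isLt)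
    omega

section Cycle
variable (n : ℕ) (g : ZMod (n+1) → ℕ)

/-- partial-sum height function -/
def Hf : ℕ → ℤ := fun m => (∑ t ∈ Finset.range m, (g ((t : ℕ) : ZMod (n+1)) : ℤ)) - m

lemma my_sum_range_add {M : Type*} [AddCommMonoid M] (f : ℕ → M) (c k : ℕ) :
    ∑ t ∈ range (c + k), f t = (∑ t ∈ range c, f t) + ∑ t ∈ range k, f (c + t) := by
  induction k with
  | zero => simp
  | succ k ih => rw [← Nat.add_assoc, Finset.sum_range_succ, ih, Finset.sum_range_succ, add_assoc]

lemma sum_window (c k : ℕ) (hk : k ≤ n + 1) :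
    ∑ v ∈ univ.filter (fun v : ZMod (n+1) => (v - (c : ZMod (n+1))).val < k), g v
      = ∑ t ∈ range k, g ((c + t : ℕ) : ZMod (n+1)) := by
  apply Finset.sum_nbij' (i := fun v => (v - (c : ZMod (n+1))).val)
    (j := fun t => ((c + t : ℕ) : ZMod (n+1)))
  · intro v hv
    rw [mem_filter] at hv
    exact mem_range.mpr hv.2
  · intro t ht
    rw [mem_range] at ht
    rw [mem_filter]
    refine ⟨mem_univ _, ?_⟩
    have : ((c + t : ℕ) : ZMod (n+1)) - (c : ZMod (n+1)) = ((t : ℕ) : ZMod (n+1)) := by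
      push_cast; ring
    rw [this, ZMod.val_cast_of_lt (lt_of_lt_of_le ht hk)]
    exact ht
  · intro v hv
    show ((c + (v - (c : ZMod (n+1))).val : ℕ) : ZMod (n+1)) = v
    rw [Nat.cast_add, ZMod.natCast_rightInverse _]
    ring
  · intro t ht
    rw [mem_range] at ht
    have : ((c + t : ℕ) : ZMod (n+1)) - (c : ZMod (n+1)) = ((t : ℕ) : ZMod (n+1)) := by
      push_cast; ring
    rw [this, ZMod.val_cast_of_lt (lt_of_lt_of_le ht hk)]
  · intro v hv
    have hrw : ((c + (v - (c : ZMod (n+1))).val : ℕ) : ZMod (n+1)) = v := by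
      rw [Nat.cast_add, ZMod.natCast_rightInverse _]
      ring
    rw [hrw]

lemma Hf_add (c k : ℕ) :
    Hf n g (c + k) = Hf n g c + (∑ t ∈ range k, (g ((c + t : ℕ) : ZMod (n+1)) : ℤ)) - k := by
  unfold Hf
  rw [my_sum_range_add]
  push_cast
  ring

lemma Hf_period (hsum : ∑ v, g v = n) (m : ℕ) :
    Hf n g (m + (n+1)) = Hf n g m - 1 := by
  have hw := sum_window n g m (n+1) le_rfl
  have hfull : univ.filter (fun v : ZMod (n+1) => (v - (m : ZMod (n+1))).val < n+1) = univ := by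
    apply Finset.filter_true_of_mem
    intro v _
    exact ZMod.val_lt _
  rw [hfull, hsum] at hw
  rw [Hf_add]
  have h2 : (∑ t ∈ range (n+1), (g ((m + t : ℕ) : ZMod (n+1)) : ℤ)) = (n : ℤ) := by
    rw [← Nat.cast_sum, ← hw]
  rw [h2]
  push_cast
  ring

/-- The shifted-parking condition at lift `c`. -/
def Cond (c : ℕ) : Prop := ∀ k ∈ Icc 1 n, k ≤ ∑ t ∈ range k, g ((c + t : ℕ) : ZMod (n+1))

lemma cond_iff (c : ℕ) : Cond n g c ↔ ∀ k ∈ Icc 1 n, Hf n g c ≤ Hf n g (c + k) := by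
  unfold Cond
  apply forall₂_congr
  intro k hk
  rw [Hf_add]
  constructor
  · intro h
    have : (k : ℤ) ≤ ∑ t ∈ range k, (g ((c + t : ℕ) : ZMod (n+1)) : ℤ) := by
      rw [← Nat.cast_sum]; exact_mod_cast h
    linarith
  · intro h
    have : (k : ℤ) ≤ ∑ t ∈ range k, (g ((c + t : ℕ) : ZMod (n+1)) : ℤ) := by linarith
    rw [← Nat.cast_sum] at this
    exact_mod_cast this

lemma cond_congr (c c' : ℕ) (h : (c : ZMod (n+1)) = (c' : ZMod (n+1))) :
    Cond n g c ↔ Cond n g c' := by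
  unfold Cond
  apply forall₂_congr
  intro k _
  have : ∀ t, ((c + t : ℕ) : ZMod (n+1)) = ((c' + t : ℕ) : ZMod (n+1)) := by
    intro t; push_cast; rw [h]
  simp only [this]

theorem cycle_exists_unique (hsum : ∑ v, g v = n) :
    ∃! c : ZMod (n+1), Cond n g c.val := by
  -- existence: leftmost argmin of Hf on [0, n]
  have hex : ∃ m : ℕ, m ≤ n ∧ ∀ m' ≤ n, Hf n g m ≤ Hf n g m' := by
    obtain ⟨m, hm, hmin⟩ := Finset.exists_min_image (range (n+1)) (Hf n g) ⟨0, mem_range.mpr (Nat.succ_pos n)⟩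
    exact ⟨m, Nat.lt_succ_iff.mp (mem_range.mp hm),
      fun m' hm' => hmin m' (mem_range.mpr (Nat.lt_succ_iff.mpr hm'))⟩
  classical
  set c₀ := Nat.find hex with hc₀
  have hspec := Nat.find_spec hex
  rw [← hc₀] at hspec
  obtain ⟨hc₀n, hc₀min⟩ := hspec
  have hleft : ∀ m < c₀, Hf n g c₀ + 1 ≤ Hf n g m := by
    intro m hm
    have h1 := Nat.find_min hex hm
    push_neg at h1
    obtain ⟨m', hm', hlt⟩ := h1 (le_trans (le_of_lt hm) hc₀n)
    have h2 := hc₀min m' hm'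
    linarith
  have hcond : Cond n g c₀ := by
    rw [cond_iff]
    intro k hk
    rw [mem_Icc] at hk
    by_cases hck : c₀ + k ≤ n
    · exact hc₀min _ hck
    · have hm : c₀ + k = (c₀ + k - (n+1)) + (n+1) := by omega
      rw [hm, Hf_period n g hsum]
      have h3 := hleft (c₀ + k - (n+1)) (by omega)
      linarith
  refine ⟨(c₀ : ZMod (n+1)), ?_, ?_⟩
  · rw [← cond_congr n g _ c₀ (by rw [ZMod.natCast_rightInverse _])] at hcond
    exact hcond
  · -- uniqueness
    intro c hc
    have key : ∀ a b : ℕ, a < b → b ≤ n → Cond n g a → Cond n g b → False := by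
      intro a b hab hbn ha hb
      rw [cond_iff] at ha hb
      have h1 : Hf n g a ≤ Hf n g b := by
        have := ha (b - a) (mem_Icc.mpr ⟨by omega, by omega⟩)
        rwa [show a + (b - a) = b by omega] at this
      have h2 : Hf n g b ≤ Hf n g a - 1 := by
        have := hb (a + (n+1) - b) (mem_Icc.mpr ⟨by omega, by omega⟩)
        rw [show b + (a + (n+1) - b) = a + (n+1) by omega, Hf_period n g hsum] at this
        exact this
      linarith
    have hcv : (c.val : ZMod (n+1)) = c := ZMod.natCast_rightInverse c
    have hcval : c.val ≤ n := Nat.lt_succ_iff.mp (ZMod.val_lt c)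
    rcases lt_trichotomy c.val c₀ with h | h | h
    · exact (key c.val c₀ h hc₀n hc hcond).elim
    · rw [← hcv, h]
    · exact (key c₀ c.val h hcval hcond hc).elim

end Cycle

section Shift
variable (n : ℕ)

def PFZ (g : Fin n → ZMod (n+1)) : Prop :=
  ∀ k ∈ Icc 1 n, k ≤ (univ.filter (fun i => (g i).val < k)).card

lemma count_shift (f : Fin n → ZMod (n+1)) (c : ZMod (n+1)) (k : ℕ) (hk : k ≤ n+1) :
    (univ.filter (fun i => ((f i) - c).val < k)).card
      = ∑ t ∈ range k, (univ.filter (fun i => f i = ((c.val + t : ℕ) : ZMod (n+1)))).card := by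
  have hc : ((c.val : ℕ) : ZMod (n+1)) = c := ZMod.natCast_rightInverse c
  have h1 : (univ.filter (fun i => ((f i) - c).val < k)).card
      = ∑ v ∈ univ.filter (fun v : ZMod (n+1) => (v - c).val < k),
          ((univ.filter (fun i => ((f i) - c).val < k)).filter (fun i => f i = v)).card := by
    apply Finset.card_eq_sum_card_fiberwise
    intro i hi
    rw [Finset.mem_coe, mem_filter] at hi ⊢
    exact ⟨mem_univ _, hi.2⟩
  rw [h1]
  have h2 : ∀ v ∈ univ.filter (fun v : ZMod (n+1) => (v - c).val < k),
      ((univ.filter (fun i => ((f i) - c).val < k)).filter (fun i => f i = v)).card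
        = (univ.filter (fun i => f i = v)).card := by
    intro v hv
    rw [mem_filter] at hv
    congr 1
    ext i
    simp only [mem_filter, mem_univ, true_and, and_iff_right_iff_imp]
    intro h
    rw [h]
    exact hv.2
  rw [Finset.sum_congr rfl h2]
  have := sum_window n (fun v => (univ.filter (fun i => f i = v)).card) c.val k hk
  rw [hc] at this
  exact this

lemma exists_unique_shift (f : Fin n → ZMod (n+1)) :
    ∃! c : ZMod (n+1), PFZ n (fun i => f i - c) := by
  have hsum : ∑ v, (univ.filter (fun i => f i = v)).card = n := by
    have h := Finset.card_eq_sum_card_fiberwise (s := (univ : Finset (Fin n)))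
      (t := (univ : Finset (ZMod (n+1)))) (f := f) (fun x _ => mem_univ _)
    simpa using h.symm
  have hiff : ∀ c : ZMod (n+1),
      PFZ n (fun i => f i - c) ↔ Cond n (fun v => (univ.filter (fun i => f i = v)).card) c.val := by
    intro c
    unfold PFZ Cond
    apply forall₂_congr
    intro k hk
    rw [mem_Icc] at hk
    rw [count_shift n f c k (by omega)]
  exact (existsUnique_congr hiff).mpr
    (cycle_exists_unique n (fun v => (univ.filter (fun i => f i = v)).card) hsum)

def emb (α : Fin n → Fin n) : Fin n → ZMod (n+1) := fun i => ((α i : ℕ) : ZMod (n+1))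

lemma emb_val (α : Fin n → Fin n) (i : Fin n) : (emb n α i).val = (α i : ℕ) :=
  ZMod.val_cast_of_lt (by omega)

lemma isPF_iff_PFZ (α : Fin n → Fin n) : IsPF n α ↔ PFZ n (emb n α) := by
  rw [isPF_iff]
  unfold PFZ
  apply forall₂_congr
  intro k _
  have : ∀ i, (emb n α i).val = (α i : ℕ) := emb_val n α
  simp only [this]

end Shift

section Count
variable (n : ℕ)

lemma key_count (Q : (Fin n → ZMod (n+1)) → Prop) [DecidablePred Q]
    (hQ : ∀ (g : Fin n → ZMod (n+1)) (c : ZMod (n+1)), Q (fun i => g i + c) ↔ Q g) :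
    (univ.filter (fun α : Fin n → Fin n => IsPF n α ∧ Q (emb n α))).card * (n+1)
      = (univ.filter Q).card := by
  classical
  calc (univ.filter (fun α : Fin n → Fin n => IsPF n α ∧ Q (emb n α))).card * (n+1)
      = ((univ.filter (fun α : Fin n → Fin n => IsPF n α ∧ Q (emb n α))) ×ˢ
          (univ : Finset (ZMod (n+1)))).card := by
        rw [Finset.card_product, card_univ, ZMod.card]
    _ = (univ.filter Q).card := by
        apply Finset.card_bij
          (fun (p : (Fin n → Fin n) × ZMod (n+1)) _ => fun i => emb n p.1 i + p.2)
        · rintro ⟨α, c⟩ hp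
          rw [mem_product, mem_filter] at hp
          rw [mem_filter]
          exact ⟨mem_univ _, (hQ (emb n α) c).mpr hp.1.2.2⟩
        · rintro ⟨α, c⟩ hp ⟨α', c'⟩ hp' heq
          rw [mem_product, mem_filter] at hp hp'
          have h1 : PFZ n (fun i => (emb n α i + c) - c) := by
            simpa using (isPF_iff_PFZ n α).mp hp.1.2.1
          have h2 : PFZ n (fun i => (emb n α i + c) - c') := by
            have hfun : (fun i => emb n α i + c - c') = emb n α' := by
              funext x
              rw [congrFun heq x]
              ring
            rw [hfun]
            exact (isPF_iff_PFZ n α').mp hp'.1.2.1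
          obtain ⟨c₀, -, huniq⟩ := exists_unique_shift n (fun i => emb n α i + c)
          have hcc : c = c' := by rw [huniq c h1, huniq c' h2]
          have hαα : α = α' := by
            funext x
            have := congrFun heq x
            rw [← hcc] at this
            have h3 : emb n α x = emb n α' x := by
              exact add_right_cancel this
            have h4 := congrArg ZMod.val h3
            rw [emb_val, emb_val] at h4
            exact Fin.ext h4
          rw [Prod.ext_iff]
          exact ⟨hαα, hcc⟩
        · intro f hf
          rw [mem_filter] at hf
          obtain ⟨c, hc, -⟩ := exists_unique_shift n f
          have hlt : ∀ i, (f i - c).val < n := by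
            intro i
            have hn : 1 ≤ n := i.pos
            have h : n ≤ (univ.filter (fun j => ((f j) - c).val < n)).card :=
              hc n (mem_Icc.mpr ⟨hn, le_rfl⟩)
            have hcardle : (univ.filter (fun j => ((f j) - c).val < n)).card ≤ n := by
              simpa using Finset.card_le_univ (univ.filter (fun j => ((f j) - c).val < n))
            have heq : univ.filter (fun j => ((f j) - c).val < n) = univ := by
              apply Finset.eq_univ_of_card
              simp only [Fintype.card_fin]
              omega
            have : i ∈ univ.filter (fun j => ((f j) - c).val < n) := by
              rw [heq]; exact mem_univ i
            exact (mem_filter.mp this).2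
          refine ⟨(fun i => ⟨(f i - c).val, hlt i⟩, c), ?_, ?_⟩
          · have hemb : emb n (fun i => (⟨(f i - c).val, hlt i⟩ : Fin n)) = fun i => f i - c := by
              funext i
              show (((f i - c).val : ℕ) : ZMod (n+1)) = f i - c
              exact ZMod.natCast_rightInverse _
            rw [mem_product, mem_filter]
            refine ⟨⟨mem_univ _, ?_, ?_⟩, mem_univ _⟩
            · rw [isPF_iff_PFZ, hemb]
              exact hc
            · rw [hemb]
              have h5 := hQ (fun i => f i - c) c
              have h6 : (fun i => f i - c + c) = f := by funext i; ring
              rw [h6] at h5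
              exact h5.mp hf.2
          · funext i
            show (((f i - c).val : ℕ) : ZMod (n+1)) + c = f i
            rw [ZMod.natCast_rightInverse _]
            ring

lemma card_PF : (univ.filter (fun α : Fin n → Fin n => IsPF n α)).card * (n+1) = (n+1)^n := by
  classical
  have h := key_count n (fun _ => True) (by simp)
  simp only [and_true] at h
  rw [h, Finset.filter_true, card_univ]
  simp [ZMod.card]

lemma card_PF_eqpair (i j : Fin n) (hij : i ≠ j) :
    (univ.filter (fun α : Fin n → Fin n => IsPF n α ∧ α i = α j)).card * (n+1)
      = (n+1)^(n-1) := by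
  classical
  have h := key_count n (fun f => f i = f j) (fun g c => by
    constructor
    · intro h'; exact add_right_cancel h'
    · intro h'; simp [h'])
  have hfix : (univ.filter (fun α : Fin n → Fin n => IsPF n α ∧ emb n α i = emb n α j))
      = (univ.filter (fun α : Fin n → Fin n => IsPF n α ∧ α i = α j)) := by
    apply Finset.filter_congr
    intro α _
    constructor
    · rintro ⟨h1, h2⟩
      refine ⟨h1, ?_⟩
      have := congrArg ZMod.val h2
      rw [emb_val, emb_val] at this
      exact Fin.ext this
    · rintro ⟨h1, h2⟩
      refine ⟨h1, ?_⟩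
      show ((α i : ℕ) : ZMod (n+1)) = ((α j : ℕ) : ZMod (n+1))
      rw [h2]
  rw [hfix] at h
  rw [h]
  have hbij : (univ.filter (fun f : Fin n → ZMod (n+1) => f i = f j)).card
      = Fintype.card ({x : Fin n // x ≠ j} → ZMod (n+1)) := by
    rw [← card_univ]
    apply Finset.card_bij (fun f _ => fun (x : {x : Fin n // x ≠ j}) => f x.1)
    · exact fun _ _ => mem_univ _
    · intro f hf f' hf' heq
      rw [mem_filter] at hf hf'
      funext x
      by_cases hx : x = j
      · subst hx
        rw [← hf.2, ← hf'.2]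
        exact congrFun heq ⟨i, hij⟩
      · exact congrFun heq ⟨x, hx⟩
    · intro g _
      refine ⟨fun x => if hx : x = j then g ⟨i, hij⟩ else g ⟨x, hx⟩,
        mem_filter.mpr ⟨mem_univ _, ?_⟩, ?_⟩
      · simp [hij]
      · funext x
        simp [x.2]
  rw [hbij, Fintype.card_fun, ZMod.card]
  congr 1
  rw [Fintype.card_subtype_compl, Fintype.card_subtype_eq, Fintype.card_fin]

end Count

/-- The number of inversions of a word: pairs `(i,j)` with `i < j` and `α i > α j`. -/
def invCount (n : ℕ) (α : Fin n → Fin n) : ℕ :=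
  (Finset.univ.filter (fun p : Fin n × Fin n => p.1 < p.2 ∧ α p.2 < α p.1)).card

lemma isPF_comp (n : ℕ) (α : Fin n → Fin n) (τ : Equiv.Perm (Fin n)) (h : IsPF n α) :
    IsPF n (α ∘ τ) := by
  obtain ⟨σ, h1, h2⟩ := h
  refine ⟨σ.trans τ.symm, ?_, ?_⟩
  · intro a b hab
    have := h1 a b hab
    simpa [Function.comp, Equiv.trans_apply, Equiv.apply_symm_apply] using this
  · intro a
    have := h2 a
    simpa [Function.comp, Equiv.trans_apply, Equiv.apply_symm_apply] using this

lemma card_swap (n : ℕ) (i j : Fin n) :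
    (univ.filter (fun α : Fin n → Fin n => IsPF n α ∧ α j < α i)).card
      = (univ.filter (fun α : Fin n → Fin n => IsPF n α ∧ α i < α j)).card := by
  classical
  apply Finset.card_nbij' (i := fun α => α ∘ Equiv.swap i j) (j := fun α => α ∘ Equiv.swap i j)
  · intro α hα
    rw [Finset.mem_coe, mem_filter] at hα ⊢
    refine ⟨mem_univ _, isPF_comp n α _ hα.2.1, ?_⟩
    simpa [Function.comp, Equiv.swap_apply_left, Equiv.swap_apply_right] using hα.2.2
  · intro α hα
    rw [Finset.mem_coe, mem_filter] at hα ⊢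
    refine ⟨mem_univ _, isPF_comp n α _ hα.2.1, ?_⟩
    simpa [Function.comp, Equiv.swap_apply_left, Equiv.swap_apply_right] using hα.2.2
  · intro α _
    funext x
    simp [Function.comp, Equiv.swap_apply_self]
  · intro α _
    funext x
    simp [Function.comp, Equiv.swap_apply_self]

lemma two_mul_choose_two (n : ℕ) : 2 * Nat.choose n 2 = n * (n - 1) := by
  induction n with
  | zero => rfl
  | succ m ih =>
    rw [Nat.choose_succ_succ, Nat.choose_one_right, Nat.mul_add, ih, Nat.succ_sub_one]
    cases m with
    | zero => rfl
    | succ k =>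
      rw [Nat.succ_sub_one]
      ring

lemma card_lt_pairs (n : ℕ) :
    (univ.filter (fun p : Fin n × Fin n => p.1 < p.2)).card = Nat.choose n 2 := by
  classical
  have hsym : (univ.filter (fun p : Fin n × Fin n => p.1 < p.2)).card
      = (univ.filter (fun p : Fin n × Fin n => p.2 < p.1)).card := by
    apply Finset.card_nbij' (i := fun p => (p.2, p.1)) (j := fun p => (p.2, p.1))
    · intro p hp; rw [Finset.mem_coe, mem_filter] at hp ⊢; exact ⟨mem_univ _, hp.2⟩
    · intro p hp; rw [Finset.mem_coe, mem_filter] at hp ⊢; exact ⟨mem_univ _, hp.2⟩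
    · intro p _; rfl
    · intro p _; rfl
  have hdiag : (univ.filter (fun p : Fin n × Fin n => p.1 = p.2)).card = n := by
    have : (univ.filter (fun p : Fin n × Fin n => p.1 = p.2)).card
        = (univ : Finset (Fin n)).card := by
      apply Finset.card_nbij' (i := fun p => p.1) (j := fun x => (x, x))
      · intro p _; exact mem_univ _
      · intro x _; rw [Finset.mem_coe, mem_filter]; exact ⟨mem_univ _, rfl⟩
      · intro p hp
        rw [Finset.mem_coe, mem_filter] at hp
        rw [Prod.ext_iff]
        exact ⟨rfl, hp.2⟩
      · intro x _; rfl
    rw [this, card_univ, Fintype.card_fin]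
  have hpart : (univ : Finset (Fin n × Fin n)).card
      = (univ.filter (fun p : Fin n × Fin n => p.1 < p.2)).card
        + (univ.filter (fun p : Fin n × Fin n => p.2 < p.1)).card
        + (univ.filter (fun p : Fin n × Fin n => p.1 = p.2)).card := by
    rw [Finset.card_filter, Finset.card_filter, Finset.card_filter,
      ← Finset.sum_add_distrib, ← Finset.sum_add_distrib, Finset.card_eq_sum_ones]
    apply Finset.sum_congr rfl
    intro p _
    rcases lt_trichotomy p.1 p.2 with h | h | h
    · simp [h, lt_asymm h, ne_of_lt h]
    · simp [h]
    · simp [h, lt_asymm h, (ne_of_lt h).symm]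
  have htot : (univ : Finset (Fin n × Fin n)).card = n * n := by
    rw [card_univ]
    simp [Fintype.card_prod, Fintype.card_fin]
  have h2c := two_mul_choose_two n
  have hx : n * (n - 1) + n = n * n := by
    cases n with
    | zero => rfl
    | succ m => rw [Nat.succ_sub_one]; ring
  omega

/-- The total number of inversions across all parking functions of length `n` is
`(n(n+1)^{n-2}/2) · C(n,2)`. -/
theorem total_inversions_parking_functions (n : ℕ) (hn : 1 ≤ n) :
    2 * ∑ α ∈ Finset.univ.filter (fun α : Fin n → Fin n => IsPF n α), invCount n α =
      n * (n + 1) ^ (n - 2) * Nat.choose n 2 := by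
  classical
  have hA : (univ.filter (fun α : Fin n → Fin n => IsPF n α)).card = (n+1)^(n-1) := by
    have h := card_PF n
    have hpow : (n+1)^n = (n+1)^(n-1) * (n+1) := by
      rw [← pow_succ]
      congr 1
      omega
    rw [hpow] at h
    exact Nat.eq_of_mul_eq_mul_right (by omega) h
  have hinv : ∀ α : Fin n → Fin n, invCount n α
      = ∑ p ∈ univ.filter (fun p : Fin n × Fin n => p.1 < p.2),
          (if α p.2 < α p.1 then 1 else 0) := by
    intro α
    unfold invCount
    rw [Finset.sum_filter, Finset.card_filter]
    apply Finset.sum_congr rfl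
    intro p _
    by_cases h1 : p.1 < p.2 <;> by_cases h2 : α p.2 < α p.1 <;> simp [h1, h2]
  have hstep : ∑ α ∈ univ.filter (fun α : Fin n → Fin n => IsPF n α), invCount n α
      = ∑ p ∈ univ.filter (fun p : Fin n × Fin n => p.1 < p.2),
          ∑ α ∈ univ.filter (fun α : Fin n → Fin n => IsPF n α),
            (if α p.2 < α p.1 then 1 else 0) := by
    rw [Finset.sum_congr rfl (fun α _ => hinv α)]
    exact Finset.sum_comm
  rw [hstep, Finset.mul_sum]
  have hper : ∀ p ∈ univ.filter (fun p : Fin n × Fin n => p.1 < p.2),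
      2 * ∑ α ∈ univ.filter (fun α : Fin n → Fin n => IsPF n α),
          (if α p.2 < α p.1 then 1 else 0)
        = n * (n+1)^(n-2) := by
    clear hinv hstep
    rintro ⟨i, j⟩ hp
    rw [mem_filter] at hp
    have hij : i < j := hp.2
    have hijne : i ≠ j := ne_of_lt hij
    have hn2 : 2 ≤ n := by
      have h1 := j.isLt
      have h2 : (i : ℕ) < (j : ℕ) := hij
      omega
    have hsum : ∑ α ∈ univ.filter (fun α : Fin n → Fin n => IsPF n α),
        (if α j < α i then 1 else 0)
          = (univ.filter (fun α : Fin n → Fin n => IsPF n α ∧ α j < α i)).card := by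
      rw [Finset.sum_filter, Finset.card_filter]
      apply Finset.sum_congr rfl
      intro α _
      by_cases h1 : IsPF n α <;> by_cases h2 : α j < α i <;> simp [h1, h2]
    rw [hsum]
    clear hsum
    have hpow : (n+1)^(n-1) = (n+1)^(n-2) * (n+1) := by
      rw [← pow_succ]
      congr 1
      omega
    have hE : (univ.filter (fun α : Fin n → Fin n => IsPF n α ∧ α i = α j)).card
        = (n+1)^(n-2) := by
      have h := card_PF_eqpair n i j hijne
      rw [hpow] at h
      exact Nat.eq_of_mul_eq_mul_right (Nat.succ_pos n) h
    have hsplit : (univ.filter (fun α : Fin n → Fin n => IsPF n α)).card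
        = (univ.filter (fun α : Fin n → Fin n => IsPF n α ∧ α j < α i)).card
          + (univ.filter (fun α : Fin n → Fin n => IsPF n α ∧ α i < α j)).card
          + (univ.filter (fun α : Fin n → Fin n => IsPF n α ∧ α i = α j)).card := by
      rw [Finset.card_filter, Finset.card_filter, Finset.card_filter, Finset.card_filter,
        ← Finset.sum_add_distrib, ← Finset.sum_add_distrib]
      apply Finset.sum_congr rfl
      intro α _
      by_cases h0 : IsPF n α
      · rcases lt_trichotomy (α i) (α j) with h | h | h
        · simp [h0, h, lt_asymm h, ne_of_lt h]
        · simp [h0, h]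
        · simp [h0, h, lt_asymm h, (ne_of_lt h).symm]
      · simp [h0]
    have hswap := card_swap n i j
    have hkey : (n+1)^(n-1)
        = 2 * (univ.filter (fun α : Fin n → Fin n => IsPF n α ∧ α j < α i)).card
          + (n+1)^(n-2) := by
      rw [← hA, hsplit, ← hswap, hE]
      ring
    have h9 : 2 * (univ.filter (fun α : Fin n → Fin n => IsPF n α ∧ α j < α i)).card
          + (n+1)^(n-2)
        = n * (n+1)^(n-2) + (n+1)^(n-2) := by
      rw [← hkey, hpow]
      ring
    exact Nat.add_right_cancel h9
  rw [Finset.sum_congr rfl hper, Finset.sum_const, smul_eq_mul, card_lt_pairs]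
  ring
end

section
/- For n >= 2, the total number of descents over all Cayley permutations of length n is ((n-1)/2)(Fub_n - Fub_{n-1}), i.e., 2 * sum_{w in C_n} des(w) = (n-1)(Fub_n - Fub_{n-1}). -/
/-- A Cayley permutation of length `n`, encoded with 0-indexed values (value `k : Fin n`
represents the positive integer `k+1`): if a value appears then all smaller values
appear. -/
def IsCayley (n : ℕ) (w : Fin n → Fin n) : Prop :=
  ∀ (i : Fin n) (v : Fin n), v ≤ w i → ∃ j, w j = v

instance (n : ℕ) : DecidablePred (IsCayley n) := fun _ => by unfold IsCayley; infer_instance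

/-- `Fub m` is the number of Cayley permutations of length `m` (the `m`-th Fubini
number). -/
def Fub (m : ℕ) : ℕ :=
  (Finset.univ.filter (fun w : Fin m → Fin m => IsCayley m w)).card

/-- The number of descents of a word: indices `i ∈ [n-1]` with `w i > w (i+1)`. -/
def desCount (n : ℕ) (w : Fin n → Fin n) : ℕ :=
  (Finset.univ.filter
    (fun p : Fin n × Fin n => (p.1 : ℕ) + 1 = (p.2 : ℕ) ∧ w p.2 < w p.1)).card

namespace CayleyAux

open Finset

/-- The set of adjacent pairs. -/
def adjSet (n : ℕ) : Finset (Fin n × Fin n) :=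
  Finset.univ.filter fun p => (p.1 : ℕ) + 1 = (p.2 : ℕ)

lemma mem_adjSet {n : ℕ} {p : Fin n × Fin n} :
    p ∈ adjSet n ↔ (p.1 : ℕ) + 1 = (p.2 : ℕ) := by
  simp [adjSet]

lemma card_adjSet (n : ℕ) : (adjSet n).card = n - 1 := by
  rw [show n - 1 = (Finset.range (n - 1)).card from (Finset.card_range _).symm]
  refine Finset.card_bij' (fun p _ => (p.1 : ℕ))
    (fun i hi => (⟨i, by simp only [Finset.mem_range] at hi; omega⟩,
                  ⟨i + 1, by simp only [Finset.mem_range] at hi; omega⟩)) ?_ ?_ ?_ ?_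
  · intro p hp
    rw [mem_adjSet] at hp
    have := p.2.isLt
    simp only [Finset.mem_range]; omega
  · intro i hi
    rw [mem_adjSet]
  · intro p hp
    rw [mem_adjSet] at hp
    ext <;> simp <;> omega
  · intro i hi
    rfl

def ascCount (n : ℕ) (w : Fin n → Fin n) : ℕ :=
  ((adjSet n).filter fun p => w p.1 < w p.2).card

def eqCount (n : ℕ) (w : Fin n → Fin n) : ℕ :=
  ((adjSet n).filter fun p => w p.1 = w p.2).card

lemma desCount_eq (n : ℕ) (w : Fin n → Fin n) :
    desCount n w = ((adjSet n).filter fun p => w p.2 < w p.1).card := by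
  rw [desCount, adjSet, Finset.filter_filter]

/-- Trichotomy: descents + ascents + equalities = n - 1. -/
lemma tri (n : ℕ) (w : Fin n → Fin n) :
    desCount n w + ascCount n w + eqCount n w = n - 1 := by
  rw [desCount_eq, ascCount, eqCount, ← card_adjSet n]
  have h1 := Finset.card_filter_add_card_filter_not
    (s := adjSet n) (p := fun p : Fin n × Fin n => w p.2 < w p.1)
  have h2 := Finset.card_filter_add_card_filter_not
    (s := (adjSet n).filter fun p : Fin n × Fin n => ¬ w p.2 < w p.1)
    (p := fun p : Fin n × Fin n => w p.1 < w p.2)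
  rw [Finset.filter_filter, Finset.filter_filter] at h2
  have h3 : ((adjSet n).filter fun p : Fin n × Fin n => ¬ w p.2 < w p.1 ∧ ¬ w p.1 < w p.2)
      = (adjSet n).filter fun p => w p.1 = w p.2 := by
    apply Finset.filter_congr
    intro p _
    constructor
    · rintro ⟨hi, hj⟩
      exact le_antisymm (not_lt.mp hi) (not_lt.mp hj)
    · rintro h
      simp [h]
  have h4 : ((adjSet n).filter fun p : Fin n × Fin n => ¬ w p.2 < w p.1 ∧ w p.1 < w p.2)
      = (adjSet n).filter fun p => w p.1 < w p.2 := by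
    apply Finset.filter_congr
    intro p _
    constructor
    · rintro ⟨_, h⟩; exact h
    · intro h; exact ⟨fun h' => absurd (h.trans h') (lt_irrefl _), h⟩
  rw [h3, h4] at h2
  omega

/-- Reversal turns descents into ascents. -/
lemma des_rev (n : ℕ) (w : Fin n → Fin n) :
    desCount n (fun j => w j.rev) = ascCount n w := by
  rw [desCount_eq, ascCount]
  refine Finset.card_bij' (fun p _ => (p.2.rev, p.1.rev)) (fun p _ => (p.2.rev, p.1.rev))
    ?_ ?_ ?_ ?_
  · intro p hp
    simp only [Finset.mem_filter, mem_adjSet] at hp ⊢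
    obtain ⟨h1, h2⟩ := hp
    refine ⟨?_, h2⟩
    have := p.1.isLt; have := p.2.isLt
    rw [Fin.val_rev, Fin.val_rev]
    omega
  · intro p hp
    simp only [Finset.mem_filter, mem_adjSet] at hp ⊢
    obtain ⟨h1, h2⟩ := hp
    refine ⟨?_, ?_⟩
    · have := p.1.isLt; have := p.2.isLt
      rw [Fin.val_rev, Fin.val_rev]
      omega
    · simpa [Fin.rev_rev] using h2
  · intro p hp; ext <;> simp [Fin.rev_rev]
  · intro p hp; ext <;> simp [Fin.rev_rev]

lemma asc_rev (n : ℕ) (w : Fin n → Fin n) :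
    ascCount n (fun j => w j.rev) = desCount n w := by
  have := des_rev n (fun j => w j.rev)
  simp only [Fin.rev_rev] at this
  rw [← this]

lemma isCayley_rev {n : ℕ} {w : Fin n → Fin n} (hw : IsCayley n w) :
    IsCayley n (fun j => w j.rev) := by
  intro i v hv
  obtain ⟨j, hj⟩ := hw i.rev v hv
  exact ⟨j.rev, by simpa [Fin.rev_rev] using hj⟩

/-- Sum of descents equals sum of ascents over Cayley permutations. -/
lemma sum_des_eq_sum_asc (n : ℕ) :
    ∑ w ∈ Finset.univ.filter (fun w : Fin n → Fin n => IsCayley n w), desCount n w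
      = ∑ w ∈ Finset.univ.filter (fun w : Fin n → Fin n => IsCayley n w), ascCount n w := by
  refine Finset.sum_bij' (fun w _ => fun j => w j.rev) (fun w _ => fun j => w j.rev)
    ?_ ?_ ?_ ?_ ?_
  · intro w hw
    simp only [Finset.mem_filter, Finset.mem_univ, true_and] at hw ⊢
    exact isCayley_rev hw
  · intro w hw
    simp only [Finset.mem_filter, Finset.mem_univ, true_and] at hw ⊢
    exact isCayley_rev hw
  · intro w hw; funext j; simp [Fin.rev_rev]
  · intro w hw; funext j; simp [Fin.rev_rev]
  · intro w hw
    exact (asc_rev n w).symm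

/-- In a Cayley permutation with a repeated adjacent value, every value is < n - 1. -/
lemma val_lt {n : ℕ} {w : Fin n → Fin n} (hw : IsCayley n w) {a b : Fin n}
    (hne : a ≠ b) (heq : w a = w b) (j : Fin n) : (w j : ℕ) < n - 1 := by
  have h1 : Finset.Iic (w j) ⊆ Finset.image w Finset.univ := by
    intro v hv
    rw [Finset.mem_Iic] at hv
    obtain ⟨k, hk⟩ := hw j v hv
    exact Finset.mem_image.mpr ⟨k, Finset.mem_univ _, hk⟩
  have h2 : Finset.image w Finset.univ ⊆ Finset.image w (Finset.univ.erase b) := by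
    intro x hx
    rw [Finset.mem_image] at hx ⊢
    obtain ⟨k, _, hk⟩ := hx
    by_cases hkb : k = b
    · exact ⟨a, Finset.mem_erase.mpr ⟨hne, Finset.mem_univ _⟩, by rw [heq, ← hkb, hk]⟩
    · exact ⟨k, Finset.mem_erase.mpr ⟨hkb, Finset.mem_univ _⟩, hk⟩
  have h3 : (Finset.Iic (w j)).card ≤ (Finset.univ.erase b : Finset (Fin n)).card :=
    le_trans (Finset.card_le_card (h1.trans h2)) Finset.card_image_le
  rw [Fin.card_Iic] at h3
  rw [Finset.card_erase_of_mem (Finset.mem_univ _), Finset.card_univ, Fintype.card_fin] at h3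
  have := j.isLt
  omega

def expandIdx (n a : ℕ) (k : Fin (n - 1)) : Fin n :=
  ⟨if (k : ℕ) ≤ a then (k : ℕ) else (k : ℕ) + 1, by have := k.isLt; split <;> omega⟩

def contractIdx (n a : ℕ) (hn : 2 ≤ n) (j : Fin n) : Fin (n - 1) :=
  ⟨if (j : ℕ) ≤ a ∧ (j : ℕ) < n - 1 then (j : ℕ) else (j : ℕ) - 1, by
    have := j.isLt; split <;> omega⟩

lemma contract_expand {n a : ℕ} (hn : 2 ≤ n) (ha : a < n - 1) (k : Fin (n - 1)) :
    contractIdx n a hn (expandIdx n a k) = k := by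
  have := k.isLt
  apply Fin.ext
  simp only [contractIdx, expandIdx]
  split_ifs <;> omega

lemma expand_contract_val {n a : ℕ} (hn : 2 ≤ n) (ha : a + 1 < n) (j : Fin n) :
    ((expandIdx n a (contractIdx n a hn j)) : ℕ) = if (j : ℕ) = a + 1 then a else (j : ℕ) := by
  have := j.isLt
  simp only [contractIdx, expandIdx]
  split_ifs <;> omega

/-- For each adjacent pair, the Cayley permutations with equal values there
number `Fub (n-1)`. -/
lemma key (n : ℕ) (hn : 2 ≤ n) (a b : Fin n) (hab : (a : ℕ) + 1 = (b : ℕ)) :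
    ((Finset.univ.filter (fun w : Fin n → Fin n => IsCayley n w)).filter
        (fun w => w a = w b)).card = Fub (n - 1) := by
  have hb := b.isLt
  have ha1 : (a : ℕ) + 1 < n ∨ (a : ℕ) + 1 = n - 1 + 1 := by omega
  have han : (a : ℕ) < n - 1 := by omega
  have hane : a ≠ b := by
    intro h; rw [h] at hab; omega
  rw [Fub]
  refine Finset.card_bij'
    (fun w hw => fun k : Fin (n - 1) =>
      (⟨(w (expandIdx n (a : ℕ) k) : ℕ), by
        simp only [Finset.mem_filter, Finset.mem_univ, true_and] at hw
        exact val_lt hw.1 hane hw.2 _⟩ : Fin (n - 1)))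
    (fun u hu => fun j : Fin n =>
      Fin.castLE (by omega) (u (contractIdx n (a : ℕ) hn j)))
    ?_ ?_ ?_ ?_
  · -- forward map lands in Cayley perms of length n-1
    intro w hw
    simp only [Finset.mem_filter, Finset.mem_univ, true_and] at hw ⊢
    obtain ⟨hwc, hweq⟩ := hw
    intro k v hv
    have hv' : (Fin.castLE (by omega : n - 1 ≤ n) v) ≤ w (expandIdx n (a : ℕ) k) := by
      simpa [Fin.le_def] using hv
    obtain ⟨j, hj⟩ := hwc (expandIdx n (a : ℕ) k) _ hv'
    refine ⟨contractIdx n (a : ℕ) hn j, ?_⟩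
    apply Fin.ext
    simp only
    have hval := expand_contract_val (a := (a : ℕ)) hn (by omega) j
    by_cases hcase : (j : ℕ) = (a : ℕ) + 1
    · have hjb : j = b := Fin.ext (by omega)
      have : (expandIdx n (a : ℕ) (contractIdx n (a : ℕ) hn j)) = a :=
        Fin.ext (by rw [hval]; simp [hcase])
      rw [this, hweq, ← hjb, hj]; rfl
    · have : (expandIdx n (a : ℕ) (contractIdx n (a : ℕ) hn j)) = j :=
        Fin.ext (by rw [hval]; simp [hcase])
      rw [this, hj]; rfl
  · -- backward map lands in the source
    intro u hu
    simp only [Finset.mem_filter, Finset.mem_univ, true_and] at hu ⊢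
    constructor
    · intro i v hv
      have hv1 : (v : ℕ) < n - 1 := by
        have h1 : (v : ℕ) ≤ (u (contractIdx n (a : ℕ) hn i) : ℕ) := hv
        have h2 := (u (contractIdx n (a : ℕ) hn i)).isLt
        omega
      obtain ⟨j, hj⟩ := hu (contractIdx n (a : ℕ) hn i) ⟨(v : ℕ), hv1⟩
        (by simpa [Fin.le_def] using hv)
      refine ⟨expandIdx n (a : ℕ) j, ?_⟩
      apply Fin.ext
      simp only [Fin.coe_castLE]
      rw [contract_expand hn han, hj]
    · have hcc : contractIdx n (a : ℕ) hn a = contractIdx n (a : ℕ) hn b := by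
        apply Fin.ext
        simp only [contractIdx]
        split_ifs <;> omega
      apply Fin.ext
      simp only [Fin.coe_castLE]
      rw [hcc]
  · -- left inverse
    intro w hw
    simp only [Finset.mem_filter, Finset.mem_univ, true_and] at hw
    obtain ⟨hwc, hweq⟩ := hw
    funext j
    apply Fin.ext
    simp only [Fin.coe_castLE]
    have hval := expand_contract_val (a := (a : ℕ)) hn (by omega) j
    by_cases hcase : (j : ℕ) = (a : ℕ) + 1
    · have hjb : j = b := Fin.ext (by omega)
      have hea : (expandIdx n (a : ℕ) (contractIdx n (a : ℕ) hn j)) = a :=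
        Fin.ext (by rw [hval]; simp [hcase])
      rw [hea, hweq, hjb]
    · have : (expandIdx n (a : ℕ) (contractIdx n (a : ℕ) hn j)) = j :=
        Fin.ext (by rw [hval]; simp [hcase])
      rw [this]
  · -- right inverse
    intro u hu
    funext k
    apply Fin.ext
    simp only [Fin.coe_castLE]
    rw [contract_expand hn han]

/-- Total equal-adjacent count over Cayley perms. -/
lemma sum_eq_count (n : ℕ) (hn : 2 ≤ n) :
    ∑ w ∈ Finset.univ.filter (fun w : Fin n → Fin n => IsCayley n w), eqCount n w
      = (n - 1) * Fub (n - 1) := by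
  have h1 : ∀ w : Fin n → Fin n, eqCount n w
      = ∑ p ∈ adjSet n, if w p.1 = w p.2 then 1 else 0 := by
    intro w
    rw [eqCount, Finset.card_filter]
  simp_rw [h1]
  rw [Finset.sum_comm]
  have h2 : ∀ p ∈ adjSet n,
      (∑ w ∈ Finset.univ.filter (fun w : Fin n → Fin n => IsCayley n w),
        if w p.1 = w p.2 then 1 else 0) = Fub (n - 1) := by
    intro p hp
    rw [← Finset.card_filter]
    exact key n hn p.1 p.2 (mem_adjSet.mp hp)
  rw [Finset.sum_congr rfl h2, Finset.sum_const, card_adjSet, smul_eq_mul]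

end CayleyAux

/-- For `n ≥ 2`, twice the total number of descents over all Cayley permutations of
length `n` equals `(n-1)(Fub n - Fub (n-1))`. -/
theorem total_descents_cayley (n : ℕ) (hn : 2 ≤ n) :
    2 * ∑ w ∈ Finset.univ.filter (fun w : Fin n → Fin n => IsCayley n w), desCount n w =
      (n - 1) * (Fub n - Fub (n - 1)) := by
  classical
  have hasc := CayleyAux.sum_des_eq_sum_asc n
  have heqc := CayleyAux.sum_eq_count n hn
  have htri : ∑ w ∈ Finset.univ.filter (fun w : Fin n → Fin n => IsCayley n w),
      (desCount n w + CayleyAux.ascCount n w + CayleyAux.eqCount n w)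
      = Fub n * (n - 1) := by
    rw [Finset.sum_congr rfl (fun w _ => CayleyAux.tri n w), Finset.sum_const, smul_eq_mul, Fub]
  rw [Finset.sum_add_distrib, Finset.sum_add_distrib, ← hasc, heqc] at htri
  set T := ∑ w ∈ Finset.univ.filter (fun w : Fin n → Fin n => IsCayley n w), desCount n w
    with hT
  -- htri : T + T + (n - 1) * Fub (n - 1) = Fub n * (n - 1)
  have hle : Fub (n - 1) ≤ Fub n := by
    have h1 : (n - 1) * Fub (n - 1) ≤ (n - 1) * Fub n := by
      calc (n - 1) * Fub (n - 1) ≤ T + T + (n - 1) * Fub (n - 1) := Nat.le_add_left _ _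
        _ = Fub n * (n - 1) := htri
        _ = (n - 1) * Fub n := Nat.mul_comm _ _
    exact Nat.le_of_mul_le_mul_left h1 (by omega)
  have hexp : (n - 1) * Fub n = (n - 1) * (Fub n - Fub (n - 1)) + (n - 1) * Fub (n - 1) := by
    rw [← Nat.mul_add, Nat.sub_add_cancel hle]
  have h5 : 2 * T + (n - 1) * Fub (n - 1) = (n - 1) * Fub n := by
    rw [Nat.mul_comm (n - 1) (Fub n), ← htri]
    ring
  rw [hexp] at h5
  exact Nat.add_right_cancel h5
end

section
/- For n >= 2, the total number of ties over all Cayley permutations of length n is (n-1) * Fub_{n-1}. -/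
/-- The number of ties of a word: indices `i ∈ [n-1]` with `w i = w (i+1)`. -/
def tieCount (n : ℕ) (w : Fin n → Fin n) : ℕ :=
  (Finset.univ.filter
    (fun p : Fin n × Fin n => (p.1 : ℕ) + 1 = (p.2 : ℕ) ∧ w p.1 = w p.2)).card

/-- If a Cayley word of length `m+1` has a repeated value, then all its values
are `< m`. -/
lemma cayley_val_lt {m : ℕ} {w : Fin (m+1) → Fin (m+1)} (hw : IsCayley (m+1) w)
    {p q : Fin (m+1)} (hpq : p ≠ q) (heq : w p = w q) (j : Fin (m+1)) :
    (w j : ℕ) < m := by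
  have hsub : Finset.Iic (w j) ⊆ (Finset.univ.erase q).image w := by
    intro v hv
    obtain ⟨r, hr⟩ := hw j v (Finset.mem_Iic.mp hv)
    by_cases hrq : r = q
    · exact Finset.mem_image.mpr ⟨p, Finset.mem_erase.mpr ⟨hpq, Finset.mem_univ p⟩,
        by rw [heq, ← hrq, hr]⟩
    · exact Finset.mem_image.mpr ⟨r, Finset.mem_erase.mpr ⟨hrq, Finset.mem_univ r⟩, hr⟩
  have h1 := Finset.card_le_card hsub
  have h2 := Finset.card_image_le (s := Finset.univ.erase q) (f := w)
  rw [Fin.card_Iic] at h1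
  have h3 : (Finset.univ.erase q).card = m := by
    rw [Finset.card_erase_of_mem (Finset.mem_univ q), Finset.card_univ, Fintype.card_fin]
    omega
  omega

/-- Delete the letter at position `p+1` of `w` (a word with a tie at `p`). -/
def delF (m : ℕ) (hm : 0 < m) (p : ℕ) (w : Fin (m+1) → Fin (m+1)) : Fin m → Fin m :=
  fun j =>
    let j' : Fin (m+1) := if (j : ℕ) ≤ p then j.castSucc else j.succ
    if h : (w j' : ℕ) < m then ⟨(w j' : ℕ), h⟩ else ⟨0, hm⟩

/-- Duplicate the letter at position `p` of `u`. -/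
def insF (m : ℕ) (p : ℕ) (u : Fin m → Fin m) : Fin (m+1) → Fin (m+1) :=
  fun j =>
    if h : (j : ℕ) ≤ p ∧ (j : ℕ) < m then (u ⟨(j : ℕ), h.2⟩).castSucc
    else if h2 : (j : ℕ) - 1 < m then (u ⟨(j : ℕ) - 1, h2⟩).castSucc else 0

/-- For `n ≥ 2`, the total number of ties over all Cayley permutations of length
`n` is `(n-1) · Fub (n-1)`. -/
theorem total_ties_cayley (n : ℕ) (hn : 2 ≤ n) :
    ∑ w ∈ Finset.univ.filter (fun w : Fin n → Fin n => IsCayley n w), tieCount n w =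
      (n - 1) * Fub (n - 1) := by
  obtain ⟨m, rfl⟩ : ∃ m, n = m + 1 := ⟨n - 1, by omega⟩
  have hm : 0 < m := by omega
  -- The tie predicate for a word `w`
  set P : (Fin (m+1) → Fin (m+1)) → Finset (Fin (m+1) × Fin (m+1)) :=
    fun w => Finset.univ.filter
      (fun p : Fin (m+1) × Fin (m+1) => (p.1 : ℕ) + 1 = (p.2 : ℕ) ∧ w p.1 = w p.2) with hP
  set A : Finset (Σ _w : Fin (m+1) → Fin (m+1), Fin (m+1) × Fin (m+1)) :=
    (Finset.univ.filter (fun w : Fin (m+1) → Fin (m+1) => IsCayley (m+1) w)).sigma P with hA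
  set B : Finset (Fin m × (Fin m → Fin m)) :=
    Finset.univ ×ˢ (Finset.univ.filter (fun u : Fin m → Fin m => IsCayley m u)) with hB
  have hLHS : ∑ w ∈ Finset.univ.filter (fun w : Fin (m+1) → Fin (m+1) => IsCayley (m+1) w),
      tieCount (m+1) w = A.card := by
    rw [hA, Finset.card_sigma]
    rfl
  have hRHS : B.card = (m + 1 - 1) * Fub (m + 1 - 1) := by
    rw [hB, Finset.card_product, Finset.card_univ, Fintype.card_fin]
    simp [Fub]
  rw [hLHS, ← hRHS]
  -- forward map: delete; backward map: insert
  set F : (Σ _w : Fin (m+1) → Fin (m+1), Fin (m+1) × Fin (m+1)) → Fin m × (Fin m → Fin m) :=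
    fun a => (if h : (a.2.1 : ℕ) < m then ⟨(a.2.1 : ℕ), h⟩ else ⟨0, hm⟩,
      delF m hm (a.2.1 : ℕ) a.1) with hF
  set G : Fin m × (Fin m → Fin m) → (Σ _w : Fin (m+1) → Fin (m+1), Fin (m+1) × Fin (m+1)) :=
    fun b => ⟨insF m (b.1 : ℕ) b.2, ((b.1 : Fin m).castSucc, (b.1 : Fin m).succ)⟩ with hG
  apply Finset.card_nbij' F G
  · -- F maps A into B
    rintro ⟨w, p, q⟩ ha
    simp only [Finset.mem_coe, hA, Finset.mem_sigma, Finset.mem_filter, Finset.mem_univ, true_and, hP] at ha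
    obtain ⟨hw, htie, heq⟩ := ha
    have hpm : (p : ℕ) < m := by have := q.isLt; omega
    have hpq : p ≠ q := by intro h; rw [h] at htie; omega
    simp only [Finset.mem_coe, hB, hF, Finset.mem_product, Finset.mem_univ, true_and, Finset.mem_filter]
    -- delF is Cayley
    intro j v hv
    have hval : ∀ j' : Fin (m+1), (w j' : ℕ) < m := cayley_val_lt hw hpq heq
    have huj : ∀ j : Fin m, (delF m hm (p : ℕ) w j : ℕ) =
        (w (if (j : ℕ) ≤ (p : ℕ) then j.castSucc else j.succ) : ℕ) := by
      intro j
      simp only [delF]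
      rw [dif_pos (hval _)]
    -- the value v, lifted to Fin (m+1)
    have hvle : (v.castSucc : Fin (m+1)) ≤ w (if (j : ℕ) ≤ (p : ℕ) then j.castSucc else j.succ) := by
      have := huj j
      have hv' : (v : ℕ) ≤ (delF m hm (p : ℕ) w j : ℕ) := hv
      simp only [Fin.le_def, Fin.coe_castSucc]
      omega
    obtain ⟨r, hr⟩ := hw _ v.castSucc hvle
    -- replace r by a position ≠ q
    obtain ⟨r, hr, hrq⟩ : ∃ r, w r = v.castSucc ∧ r ≠ q := by
      by_cases h : r = q
      · exact ⟨p, by rw [heq, ← h, hr], hpq⟩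
      · exact ⟨r, hr, h⟩
    have hrm : (r : ℕ) ≤ (p : ℕ) ∨ ((p : ℕ) + 2 ≤ (r : ℕ)) := by
      have : (r : ℕ) ≠ (q : ℕ) := fun h => hrq (Fin.ext h)
      omega
    rcases hrm with h | h
    · refine ⟨⟨(r : ℕ), lt_of_le_of_lt h hpm⟩, ?_⟩
      apply Fin.ext
      rw [huj]
      simp only [h, if_pos]
      have : (Fin.castSucc (⟨(r : ℕ), lt_of_le_of_lt h hpm⟩ : Fin m)) = r := by
        apply Fin.ext; simp
      rw [this, hr]
      simp
    · have hrm' : (r : ℕ) - 1 < m := by have := r.isLt; omega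
      refine ⟨⟨(r : ℕ) - 1, hrm'⟩, ?_⟩
      apply Fin.ext
      rw [huj]
      have hnot : ¬ ((r : ℕ) - 1 ≤ (p : ℕ)) := by omega
      simp only [hnot, if_neg, not_false_iff]
      have : (Fin.succ (⟨(r : ℕ) - 1, hrm'⟩ : Fin m)) = r := by
        apply Fin.ext; simp; omega
      rw [this, hr]
      simp
  · -- G maps B into A
    rintro ⟨i, u⟩ hb
    simp only [Finset.mem_coe, hB, Finset.mem_product, Finset.mem_univ, true_and, Finset.mem_filter] at hb
    have hu : IsCayley m u := hb
    simp only [Finset.mem_coe, hG, hA, Finset.mem_sigma, Finset.mem_filter, Finset.mem_univ, true_and, hP]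
    have hins : ∀ j : Fin (m+1), ∃ k : Fin m,
        insF m (i : ℕ) u j = (u k).castSucc ∧
        ((( j : ℕ) ≤ (i : ℕ) ∧ (k : ℕ) = (j : ℕ)) ∨ (¬ ((j : ℕ) ≤ (i : ℕ)) ∧ (k : ℕ) = (j : ℕ) - 1)) := by
      intro j
      by_cases h : (j : ℕ) ≤ (i : ℕ) ∧ (j : ℕ) < m
      · exact ⟨⟨(j : ℕ), h.2⟩, by simp [insF, h], Or.inl ⟨h.1, rfl⟩⟩
      · have hjm : (j : ℕ) - 1 < m := by have := j.isLt; omega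
        have hji : ¬ ((j : ℕ) ≤ (i : ℕ)) := by
          intro hji
          exact h ⟨hji, lt_of_le_of_lt hji i.isLt⟩
        exact ⟨⟨(j : ℕ) - 1, hjm⟩, by simp [insF, h, hjm], Or.inr ⟨hji, rfl⟩⟩
    refine ⟨?_, by simp, ?_⟩
    · -- insF is Cayley
      intro j v hv
      obtain ⟨k, hk, -⟩ := hins j
      rw [hk] at hv
      have hvm : (v : ℕ) < m := by
        have e1 := Fin.le_def.mp hv
        have e2 := (u k).isLt
        simp only [Fin.coe_castSucc] at e1
        omega
      have hvle : (⟨(v : ℕ), hvm⟩ : Fin m) ≤ u k := by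
        have := Fin.le_def.mp hv
        simp only [Fin.le_def]
        simpa using this
      obtain ⟨k', hk'⟩ := hu k ⟨(v : ℕ), hvm⟩ hvle
      by_cases h : (k' : ℕ) ≤ (i : ℕ)
      · refine ⟨k'.castSucc, ?_⟩
        obtain ⟨k'', hk'', hcase⟩ := hins k'.castSucc
        rw [hk'']
        have hkk : k'' = k' := by
          apply Fin.ext
          rcases hcase with ⟨-, h2⟩ | ⟨h1, -⟩
          · simpa using h2
          · exact absurd (by simpa using h) h1
        rw [hkk, hk']
        apply Fin.ext; simp
      · refine ⟨k'.succ, ?_⟩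
        obtain ⟨k'', hk'', hcase⟩ := hins k'.succ
        rw [hk'']
        have hkk : k'' = k' := by
          apply Fin.ext
          rcases hcase with ⟨h1, -⟩ | ⟨-, h2⟩
          · exact absurd (by simp at h1 ⊢; omega) h
          · simp at h2; omega
        rw [hkk, hk']
        apply Fin.ext; simp
    · -- the tie of insF
      have h1 : insF m (i : ℕ) u i.castSucc = (u i).castSucc := by
        have : ((i.castSucc : Fin (m+1)) : ℕ) ≤ (i : ℕ) ∧ ((i.castSucc : Fin (m+1)) : ℕ) < m := by
          simp [i.isLt]
        simp only [insF, dif_pos this]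
        congr 1
      have h2 : insF m (i : ℕ) u i.succ = (u i).castSucc := by
        have hnot : ¬ (((i.succ : Fin (m+1)) : ℕ) ≤ (i : ℕ) ∧ ((i.succ : Fin (m+1)) : ℕ) < m) := by
          simp
        have hlt : ((i.succ : Fin (m+1)) : ℕ) - 1 < m := by simp [i.isLt]
        simp only [insF, dif_neg hnot, dif_pos hlt]
        exact congrArg Fin.castSucc (congrArg u (Fin.ext (by simp)))
      rw [h1, h2]
  · -- left inverse : G (F a) = a
    rintro ⟨w, p, q⟩ ha
    simp only [Finset.mem_coe, hA, Finset.mem_sigma, Finset.mem_filter, Finset.mem_univ, true_and, hP] at ha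
    obtain ⟨hw, htie, heq⟩ := ha
    have hpm : (p : ℕ) < m := by have := q.isLt; omega
    have hpq : p ≠ q := by intro h; rw [h] at htie; omega
    have hval : ∀ j' : Fin (m+1), (w j' : ℕ) < m := cayley_val_lt hw hpq heq
    simp only [hF, hG, dif_pos hpm]
    have hfun : insF m ((⟨(p : ℕ), hpm⟩ : Fin m) : ℕ) (delF m hm (p : ℕ) w) = w := by
      funext j
      simp only []
      by_cases h : (j : ℕ) ≤ (p : ℕ) ∧ (j : ℕ) < m
      · simp only [insF, dif_pos h, delF]
        have hcs : ((Fin.castSucc (⟨(j : ℕ), h.2⟩ : Fin m)) : Fin (m+1)) = j := by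
          apply Fin.ext; simp
        simp only [h.1, if_pos, hcs]
        rw [dif_pos (hval j)]
        apply Fin.ext; simp
      · have hjm : (j : ℕ) - 1 < m := by have := j.isLt; omega
        have hjp : ¬ ((j : ℕ) ≤ (p : ℕ)) := by
          intro hji; exact h ⟨hji, lt_of_le_of_lt hji hpm⟩
        simp only [insF, dif_neg, h, not_false_iff, dif_pos hjm, delF]
        by_cases hq : (j : ℕ) = (q : ℕ)
        · -- j = q = p+1, the duplicated position
          have hle : (j : ℕ) - 1 ≤ (p : ℕ) := by omega
          simp only [hle, if_pos]
          have hcs : ((Fin.castSucc (⟨(j : ℕ) - 1, hjm⟩ : Fin m)) : Fin (m+1)) = p := by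
            apply Fin.ext; simp; omega
          rw [hcs, dif_pos (hval p)]
          have : w j = w p := by
            rw [heq]; congr 1; exact Fin.ext (by omega)
          rw [this]
          apply Fin.ext; simp
        · have hgt : ¬ ((j : ℕ) - 1 ≤ (p : ℕ)) := by omega
          simp only [hgt, if_neg, not_false_iff]
          have hcs : ((Fin.succ (⟨(j : ℕ) - 1, hjm⟩ : Fin m)) : Fin (m+1)) = j := by
            apply Fin.ext; simp; omega
          rw [hcs, dif_pos (hval j)]
          apply Fin.ext; simp
      
    refine Sigma.ext ?_ ?_
    · exact hfun
    · rw [hfun]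
      simp only [heq_eq_eq]
      refine Prod.ext ?_ ?_ <;> apply Fin.ext <;> simp
      omega
  · -- right inverse : F (G b) = b
    rintro ⟨i, u⟩ hb
    simp only [hB, Finset.mem_product, Finset.mem_univ, true_and, Finset.mem_filter] at hb
    simp only [hF, hG]
    have him : ((i.castSucc : Fin (m+1)) : ℕ) < m := by simp [i.isLt]
    rw [dif_pos him]
    refine Prod.ext (Fin.ext (by simp)) ?_
    funext j
    simp only [delF]
    have hcast : ((i.castSucc : Fin (m+1)) : ℕ) = (i : ℕ) := by simp
    by_cases h : (j : ℕ) ≤ ((i.castSucc : Fin (m+1)) : ℕ)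
    · simp only [h, if_pos]
      have hji : (j : ℕ) ≤ (i : ℕ) ∧ ((j.castSucc : Fin (m+1)) : ℕ) < m := by
        constructor
        · omega
        · simp [j.isLt]
      have : insF m (i : ℕ) u j.castSucc = (u j).castSucc := by
        have hc : ((j.castSucc : Fin (m+1)) : ℕ) ≤ (i : ℕ) ∧ ((j.castSucc : Fin (m+1)) : ℕ) < m := by
          simp [j.isLt]; omega
        simp only [insF, dif_pos hc]
        congr 1
      have hv1 : ((insF m (i : ℕ) u j.castSucc : Fin (m+1)) : ℕ) = ((u j : Fin m) : ℕ) := by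
        rw [this]; simp
      have hv2 : ((insF m (i : ℕ) u j.castSucc : Fin (m+1)) : ℕ) < m := by
        rw [hv1]; exact (u j).isLt
      rw [dif_pos hv2]
      exact Fin.ext (by simp [hv1])
    · simp only [h, if_neg, not_false_iff]
      have : insF m (i : ℕ) u j.succ = (u j).castSucc := by
        have hc : ¬ (((j.succ : Fin (m+1)) : ℕ) ≤ (i : ℕ) ∧ ((j.succ : Fin (m+1)) : ℕ) < m) := by
          intro hc
          simp at hc h
          omega
        have hlt : ((j.succ : Fin (m+1)) : ℕ) - 1 < m := by simp [j.isLt]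
        simp only [insF, dif_neg hc, dif_pos hlt]
        exact congrArg Fin.castSucc (congrArg u (Fin.ext (by simp)))
      have hv1 : ((insF m (i : ℕ) u j.succ : Fin (m+1)) : ℕ) = ((u j : Fin m) : ℕ) := by
        rw [this]; simp
      have hv2 : ((insF m (i : ℕ) u j.succ : Fin (m+1)) : ℕ) < m := by
        rw [hv1]; exact (u j).isLt
      rw [dif_pos hv2]
      exact Fin.ext (by simp [hv1])
end
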